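/- arXiv:0804.0112 — 11 statements merged into one kernel-verified Lean document; each statement's English description precedes it below -/
import Mathlib

section
/- For every odd negative integer n, q_n(w) = p_n(v) · p_{6-n}(v) / v^{2-n}, where w = 2 - (v+1)(v+2)/v; equivalently, v^{2-n} · q_n(2 - (v+1)(v+2)/v) = p_n(v) · p_{6-n}(v) as an identity in ℚ(v). -/
open Polynomial

/-- `pAux k` is the polynomial `p_{-(2k+1)}` of the paper. -/
noncomputable def pAux : ℕ → Polynomial ℤ
  | 0 => X ^ 3 + 2 * X ^ 2 + X + 1
  | 1 => -(X ^ 5 + 3 * X ^ 4 + 4 * X ^ 3 + 5 * X ^ 2 + 4 * X + 2)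
  | (k + 2) => -((X ^ 2 + X + 2) * pAux (k + 1) + X ^ 2 * pAux k)

/-- `pPosAux k` is the polynomial `p_{7+2k}` of the paper. -/
noncomputable def pPosAux : ℕ → Polynomial ℤ
  | 0 => -(X ^ 3 + 2 * X ^ 2 + 8 * X + 8)
  | 1 => X ^ 5 + 4 * X ^ 4 + 10 * X ^ 3 + 16 * X ^ 2 + 24 * X + 16
  | (k + 2) => -((X ^ 2 + X + 2) * pPosAux (k + 1) + X ^ 2 * pPosAux k)

/-- `pp n` is the polynomial `p_n` of the paper, for `n` odd with `n < 0` or `n ≥ 7`. -/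
noncomputable def pp (n : ℤ) : Polynomial ℤ :=
  if n < 0 then pAux ((-1 - n) / 2).toNat else pPosAux ((n - 7) / 2).toNat

/-- `qAux k` is the polynomial `q_{-(2k+1)}` of the paper. -/
noncomputable def qAux : ℕ → Polynomial ℤ
  | 0 => X ^ 3 - X ^ 2 + 2 * X - 7
  | 1 => X ^ 5 - 2 * X ^ 4 - 2 * X ^ 3 + 5 * X ^ 2 + 3 * X - 9
  | 2 => X ^ 7 - 2 * X ^ 6 - 4 * X ^ 5 + 8 * X ^ 4 + 4 * X ^ 3 - 7 * X ^ 2 + 2 * X - 7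
  | (k + 3) => (X ^ 2 - 1) * (qAux (k + 2) - qAux (k + 1)) + qAux k

/-- `qq n` is the polynomial `q_n` of the paper, for `n` odd and negative. -/
noncomputable def qq (n : ℤ) : Polynomial ℤ := qAux ((-1 - n) / 2).toNat

/-- The product `p_{-(2k+1)} * p_{7+2k}` satisfies a three-term linear recurrence. -/
lemma R3 (k : ℕ) : pAux (k+3) * pPosAux (k+3) =
    ((X^2+X+2)^2 - X^2) * (pAux (k+2) * pPosAux (k+2))
    - ((X^2+X+2)^2 - X^2) * X^2 * (pAux (k+1) * pPosAux (k+1))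
    + X^6 * (pAux k * pPosAux k) := by
  simp only [pAux, pPosAux]
  ring

/-- The main identity, indexed by `k` with `n = -(2k+1)`. -/
lemma key (k : ℕ) :
    (RatFunc.X : RatFunc ℚ) ^ (2*k+3) *
      aeval ((2:RatFunc ℚ) - (RatFunc.X+1)*(RatFunc.X+2)/RatFunc.X) (qAux k) =
    aeval (RatFunc.X : RatFunc ℚ) (pAux k) * aeval (RatFunc.X : RatFunc ℚ) (pPosAux k) := by
  have hx : (RatFunc.X : RatFunc ℚ) ≠ 0 := RatFunc.X_ne_zero
  set x : RatFunc ℚ := RatFunc.X with hxdef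
  set w : RatFunc ℚ := (2:RatFunc ℚ) - (x+1)*(x+2)/x with hwdef
  have hw : x * w = -(x^2 + x + 2) := by
    rw [hwdef]; field_simp; ring
  induction k using Nat.strong_induction_on with
  | _ k ih =>
    match k with
    | 0 =>
      simp only [qAux, pAux, pPosAux, map_add, map_sub, map_mul, map_pow, map_neg,
        map_ofNat, map_one, aeval_X]
      linear_combination (w^2*x^2 - w*x^3 - 2*w*x^2 - 2*w*x + x^4 + 3*x^3 + 8*x^2
        + 6*x + 4) * hw
    | 1 =>
      simp only [qAux, pAux, pPosAux, map_add, map_sub, map_mul, map_pow, map_neg,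
        map_ofNat, map_one, aeval_X]
      linear_combination (w^4*x^4 - w^3*x^5 - 3*w^3*x^4 - 2*w^3*x^3 + w^2*x^6 + 4*w^2*x^5
        + 5*w^2*x^4 + 8*w^2*x^3 + 4*w^2*x^2 - w*x^7 - 5*w*x^6 - 11*w*x^5 - 16*w*x^4
        - 22*w*x^3 - 20*w*x^2 - 8*w*x + x^8 + 6*x^7 + 18*x^6 + 37*x^5 + 63*x^4 + 74*x^3
        + 72*x^2 + 48*x + 16) * hw
    | 2 =>
      simp only [qAux, pAux, pPosAux, map_add, map_sub, map_mul, map_pow, map_neg,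
        map_ofNat, map_one, aeval_X]
      linear_combination (w^6*x^6 - w^5*x^7 - 3*w^5*x^6 - 2*w^5*x^5 + w^4*x^8 + 4*w^4*x^7
        + 3*w^4*x^6 + 8*w^4*x^5 + 4*w^4*x^4 - w^3*x^9 - 5*w^3*x^8 - 9*w^3*x^7 - 11*w^3*x^6
        - 18*w^3*x^5 - 20*w^3*x^4 - 8*w^3*x^3 + w^2*x^10 + 6*w^2*x^9 + 16*w^2*x^8
        + 30*w^2*x^7 + 51*w^2*x^6 + 60*w^2*x^5 + 64*w^2*x^4 + 48*w^2*x^3 + 16*w^2*x^2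
        - w*x^11 - 7*w*x^10 - 24*w*x^9 - 58*w*x^8 - 113*w*x^7 - 178*w*x^6 - 226*w*x^5
        - 232*w*x^4 - 192*w*x^3 - 112*w*x^2 - 32*w*x + x^12 + 8*x^11 + 33*x^10 + 96*x^9
        + 219*x^8 + 407*x^7 + 632*x^6 + 814*x^5 + 876*x^4 + 768*x^3 + 528*x^2 + 256*x
        + 64) * hw
    | (m+3) =>
      have e0 := ih m (by omega)
      have e1 := ih (m+1) (by omega)
      have e2 := ih (m+2) (by omega)
      have hR := congrArg (aeval x) (R3 m)
      simp only [map_add, map_sub, map_mul, map_pow, map_neg, map_ofNat, map_one,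
        aeval_X] at hR
      rw [show m+3 = (m+2)+1 from rfl]
      conv_lhs => rw [show (m+2)+1 = m+3 from rfl]
      simp only [qAux, map_add, map_sub, map_mul, map_pow, map_one, aeval_X]
      rw [hR, ← e0, ← e1, ← e2]
      rw [show 2*(m+3)+3 = (2*m+3)+6 by ring, show 2*(m+2)+3 = (2*m+3)+4 by ring,
        show 2*(m+1)+3 = (2*m+3)+2 by ring, pow_add, pow_add, pow_add]
      linear_combination (x^(2*m+3) * x^4 *
        (aeval w (qAux (m+2)) - aeval w (qAux (m+1))) * (x*w - (x^2+x+2))) * hw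

/-- For every odd negative integer `n`,
`v^(2-n) * q_n(2 - (v+1)(v+2)/v) = p_n(v) * p_{6-n}(v)` in `ℚ(v)`. -/
theorem pretzel_q_p_relation (n : ℤ) (hodd : Odd n) (hneg : n < 0) :
    (RatFunc.X : RatFunc ℚ) ^ (2 - n).toNat *
        Polynomial.aeval
          ((2 : RatFunc ℚ) - (RatFunc.X + 1) * (RatFunc.X + 2) / RatFunc.X) (qq n) =
      Polynomial.aeval (RatFunc.X : RatFunc ℚ) (pp n) *
        Polynomial.aeval (RatFunc.X : RatFunc ℚ) (pp (6 - n)) := by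
  obtain ⟨m, hm⟩ := hodd
  set k : ℕ := (-1 - m).toNat with hk
  have hn : n = -(2 * (k : ℤ) + 1) := by omega
  have h1 : ((-1 - n) / 2).toNat = k := by omega
  have h2 : ((6 - n - 7) / 2).toNat = k := by omega
  have h3 : (2 - n).toNat = 2 * k + 3 := by omega
  rw [qq, h1, h3, pp, if_pos hneg, h1, pp, if_neg (by omega), h2]
  exact key k
end

section
/- For every odd negative integer n, q_n(w) - w · q_n'(w) ≡ (w+1)^2 (mod 2), where q_n' denotes the formal derivative of q_n. -/
open Polynomial

lemma pnum' (m : ℕ) [m.AtLeastTwo] : (OfNat.ofNat m : Polynomial (ZMod 2)) = C (OfNat.ofNat m) :=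
  (map_ofNat C m).symm

lemma two_poly_zero : (2 : Polynomial (ZMod 2)) = 0 := by
  rw [pnum', show (2:ZMod 2)=0 from by decide, map_zero]

lemma qAux_key (k : ℕ) : (qAux k).map (Int.castRingHom (ZMod 2)) -
    X * derivative ((qAux k).map (Int.castRingHom (ZMod 2))) = (X + 1) ^ 2 := by
  have h2 := two_poly_zero
  induction k using qAux.induct with
  | case1 =>
    simp only [qAux, Polynomial.map_sub, Polynomial.map_add, Polynomial.map_mul,
      Polynomial.map_pow, Polynomial.map_X, Polynomial.map_ofNat, map_ofNat]
    simp [derivative_X_pow]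
    ring_nf
    simp only [pnum']
    norm_num
    simp only [show (2:ZMod 2)=0 from rfl, show (3:ZMod 2)=1 from rfl,
      show (7:ZMod 2)=1 from rfl, map_zero, map_one]
    linear_combination (-(1:Polynomial (ZMod 2))) * h2
  | case2 =>
    simp only [qAux, Polynomial.map_sub, Polynomial.map_add, Polynomial.map_mul,
      Polynomial.map_pow, Polynomial.map_X, Polynomial.map_ofNat, map_ofNat]
    simp [derivative_X_pow]
    ring_nf
    simp only [pnum']
    norm_num
    simp only [show (2:ZMod 2)=0 from rfl, show (3:ZMod 2)=1 from rfl, show (4:ZMod 2)=0 from rfl,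
      show (5:ZMod 2)=1 from rfl, show (6:ZMod 2)=0 from rfl, show (8:ZMod 2)=0 from rfl,
      show (9:ZMod 2)=1 from rfl, show (10:ZMod 2)=0 from rfl, map_zero, map_one]
    linear_combination (-(1:Polynomial (ZMod 2)) - X^2) * h2
  | case3 =>
    simp only [qAux, Polynomial.map_sub, Polynomial.map_add, Polynomial.map_mul,
      Polynomial.map_pow, Polynomial.map_X, Polynomial.map_ofNat, map_ofNat]
    simp [derivative_X_pow]
    ring_nf
    simp only [pnum']
    norm_num
    simp only [show (2:ZMod 2)=0 from rfl, show (3:ZMod 2)=1 from rfl, show (4:ZMod 2)=0 from rfl,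
      show (5:ZMod 2)=1 from rfl, show (6:ZMod 2)=0 from rfl, show (7:ZMod 2)=1 from rfl,
      show (8:ZMod 2)=0 from rfl, show (14:ZMod 2)=0 from rfl, show (16:ZMod 2)=0 from rfl,
      show (20:ZMod 2)=0 from rfl, show (32:ZMod 2)=0 from rfl, show (12:ZMod 2)=0 from rfl,
      map_zero, map_one]
    linear_combination (-(1:Polynomial (ZMod 2))) * h2
  | case4 k ih2 ih1 ih0 =>
    set f := (qAux (k+2)).map (Int.castRingHom (ZMod 2)) with hf
    set g := (qAux (k+1)).map (Int.castRingHom (ZMod 2)) with hg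
    set h := (qAux k).map (Int.castRingHom (ZMod 2)) with hh
    have hmap : (qAux (k+3)).map (Int.castRingHom (ZMod 2)) = (X^2 - 1) * (f - g) + h := by
      rw [show qAux (k+3) = (X ^ 2 - 1) * (qAux (k + 2) - qAux (k + 1)) + qAux k from rfl]
      simp [Polynomial.map_mul, Polynomial.map_sub, Polynomial.map_add, Polynomial.map_pow]
      rfl
    rw [hmap]
    rw [derivative_add, derivative_mul, derivative_sub, derivative_sub, derivative_pow,
      derivative_X, derivative_one]
    simp only [Nat.cast_ofNat, show (2:ZMod 2)=0 from rfl, map_zero, zero_mul, mul_zero]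
    linear_combination (X^2 - 1) * ih2 - (X^2 - 1) * ih1 + ih0

/-- For every odd negative integer `n`,
`q_n(w) - w * q_n'(w) ≡ (w+1)^2 (mod 2)`, i.e. equality holds in `𝔽₂[w]`. -/
theorem q_sub_w_deriv_mod_two (n : ℤ) (hodd : Odd n) (hneg : n < 0) :
    (qq n).map (Int.castRingHom (ZMod 2)) -
        X * derivative ((qq n).map (Int.castRingHom (ZMod 2))) =
      (X + 1) ^ 2 := by
  exact qAux_key _
end

section
/- For every odd negative integer n divisible by 3 with n ≡ 1 (mod 4), q_n(√3) = -12 + 6√3, as an evaluation in the ring ℤ[√3]. -/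
open Polynomial

/-- The periodic table of values of `qAux` at `√3`. -/
noncomputable def qTab : ℕ → ℝ
  | 0 => 5 * Real.sqrt 3 - 10
  | 1 => 6 * Real.sqrt 3 - 12
  | 2 => 5 * Real.sqrt 3 - 10
  | 3 => 3 * Real.sqrt 3 - 6
  | 4 => 2 * Real.sqrt 3 - 4
  | _ => 3 * Real.sqrt 3 - 6

lemma hs3 : Real.sqrt 3 ^ 2 = 3 := Real.sq_sqrt (by norm_num)

lemma qAux_eval (k : ℕ) :
    Polynomial.aeval (Real.sqrt 3) (qAux k) = qTab (k % 6) ∧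
    Polynomial.aeval (Real.sqrt 3) (qAux (k + 1)) = qTab ((k + 1) % 6) ∧
    Polynomial.aeval (Real.sqrt 3) (qAux (k + 2)) = qTab ((k + 2) % 6) := by
  have hs := hs3
  set s := Real.sqrt 3 with hsdef
  induction k with
  | zero =>
    refine ⟨?_, ?_, ?_⟩ <;> simp [qAux, qTab, map_ofNat]
    · linear_combination (s - 1) * hs
    · linear_combination (s ^ 3 - 2 * s ^ 2 + s - 1) * hs
    · linear_combination (s ^ 5 - 2 * s ^ 4 - s ^ 3 + 2 * s ^ 2 + s - 1) * hs
  | succ k ih =>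
    obtain ⟨h0, h1, h2⟩ := ih
    refine ⟨h1, h2, ?_⟩
    have hrec : Polynomial.aeval s (qAux (k + 3)) =
        2 * (Polynomial.aeval s (qAux (k + 2)) - Polynomial.aeval s (qAux (k + 1)))
          + Polynomial.aeval s (qAux k) := by
      show Polynomial.aeval s ((X ^ 2 - 1) * (qAux (k + 2) - qAux (k + 1)) + qAux k) = _
      simp only [map_add, map_mul, map_sub, map_pow, map_one, aeval_X]
      rw [hs]; ring
    have h6 : k % 6 = 0 ∨ k % 6 = 1 ∨ k % 6 = 2 ∨ k % 6 = 3 ∨ k % 6 = 4 ∨ k % 6 = 5 := by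
      omega
    rcases h6 with h | h | h | h | h | h <;>
      · have e1 : (k + 1) % 6 = (k % 6 + 1) % 6 := by omega
        have e2 : (k + 2) % 6 = (k % 6 + 2) % 6 := by omega
        have e3 : (k + 1 + 2) % 6 = (k % 6 + 3) % 6 := by omega
        rw [e3, hrec, h0, h1, h2, e1, e2, h] <;> simp [qTab] <;> ring

/-- For every odd negative integer `n` divisible by `3` with `n ≡ 1 (mod 4)`,
`q_n(√3) = -12 + 6√3` (evaluated in `ℤ[√3] ⊆ ℝ`). -/
theorem q_eval_sqrt_three (n : ℤ) (hodd : Odd n) (hneg : n < 0)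
    (h3 : 3 ∣ n) (h4 : n % 4 = 1) :
    Polynomial.aeval (Real.sqrt 3) (qq n) = -12 + 6 * Real.sqrt 3 := by
  obtain ⟨m, hm⟩ := hodd
  obtain ⟨t, ht⟩ := h3
  have hk : (((-1 - n) / 2).toNat) % 6 = 1 := by omega
  have := (qAux_eval (((-1 - n) / 2).toNat)).1
  rw [qq, this, hk]
  show 6 * Real.sqrt 3 - 12 = _
  ring
end

section
/- For every odd negative integer n, the polynomial q_n has no monic quadratic factor f ∈ ℤ[w] with f ≡ (w+1)^2 (mod 2) whose splitting field is ℚ(i). Equivalently: there is no monic quadratic f = w^2 + 2aw + (2b+1) ∈ ℤ[w] dividing q_n in ℤ[w] with discriminant of the form -4d^2 for a nonzero integer d. -/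
open Polynomial

lemma qAux_eval_two : ∀ k, (qAux k).eval 2 = 1
  | 0 => by norm_num [qAux]
  | 1 => by norm_num [qAux]
  | 2 => by norm_num [qAux]
  | (k + 3) => by
      have h0 := qAux_eval_two k
      have h1 := qAux_eval_two (k + 1)
      have h2 := qAux_eval_two (k + 2)
      simp [qAux, h0, h1, h2]

lemma qAux_eval_zero : ∀ k, (qAux k).eval 0 = if k % 2 = 0 then -7 else -9
  | 0 => by simp [qAux]
  | 1 => by simp [qAux]
  | 2 => by simp [qAux]
  | (k + 3) => by
      have h0 := qAux_eval_zero k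
      have h1 := qAux_eval_zero (k + 1)
      have h2 := qAux_eval_zero (k + 2)
      simp only [qAux, eval_add, eval_mul, eval_sub, eval_pow, eval_X, eval_one] at *
      rcases Nat.even_or_odd k with he | ho
      · have : k % 2 = 0 := Nat.even_iff.mp he
        have h3 : (k + 1) % 2 = 1 := by omega
        have h4 : (k + 2) % 2 = 0 := by omega
        have h5 : (k + 3) % 2 = 1 := by omega
        rw [this] at h0; rw [h3] at h1; rw [h4] at h2; rw [h5]
        simp at *
        rw [h0, h1, h2]; ring
      · have : k % 2 = 1 := Nat.odd_iff.mp ho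
        have h3 : (k + 1) % 2 = 0 := by omega
        have h4 : (k + 2) % 2 = 1 := by omega
        have h5 : (k + 3) % 2 = 0 := by omega
        rw [this] at h0; rw [h3] at h1; rw [h4] at h2; rw [h5]
        simp at *
        rw [h0, h1, h2]; ring

/-- For every odd negative integer `n`, there is no monic quadratic factor
`f = w^2 + 2a*w + (2b+1)` of `q_n` in `ℤ[w]` (such `f` reduces to `(w+1)^2`
mod `2`) whose discriminant has the form `-4d^2` with `d ≠ 0` (i.e. whose
splitting field is `ℚ(i)`). -/
theorem q_no_Qi_quadratic_factor (n : ℤ) (hodd : Odd n) (hneg : n < 0) :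
    ¬ ∃ a b d : ℤ, d ≠ 0 ∧ a ^ 2 - 2 * b - 1 = -d ^ 2 ∧
      (X ^ 2 + C (2 * a) * X + C (2 * b + 1)) ∣ qq n := by
  rintro ⟨a, b, d, hd, hdisc, hdvd⟩
  set k := ((-1 - n) / 2).toNat with hk
  have h2 : (X ^ 2 + C (2 * a) * X + C (2 * b + 1) : Polynomial ℤ).eval 2 ∣ (qq n).eval 2 :=
    Polynomial.eval_dvd hdvd
  have h0 : (X ^ 2 + C (2 * a) * X + C (2 * b + 1) : Polynomial ℤ).eval 0 ∣ (qq n).eval 0 :=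
    Polynomial.eval_dvd hdvd
  rw [qq, qAux_eval_two] at h2
  rw [qq, qAux_eval_zero] at h0
  simp only [eval_add, eval_mul, eval_pow, eval_X, eval_C] at h2 h0
  have hd1 : 1 ≤ d ^ 2 := by
    rcases lt_or_gt_of_ne hd with h | h <;> nlinarith
  have h2' : 2 ^ 2 + 2 * a * 2 + (2 * b + 1) = 1 ∨
      2 ^ 2 + 2 * a * 2 + (2 * b + 1) = -1 := by
    rcases Int.isUnit_iff.mp (isUnit_of_dvd_one h2) with h | h <;> [left; right] <;> exact h
  have hb : 2 * b + 1 = 5 := by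
    rcases h2' with h | h
    · have hA : (a + 2) ^ 2 + d ^ 2 = 1 := by linear_combination h + hdisc
      have h0a : (a + 2) ^ 2 = 0 := by nlinarith [sq_nonneg (a + 2)]
      have ha : a + 2 = 0 := by
        exact pow_eq_zero_iff two_ne_zero |>.mp h0a
      have ha' : a = -2 := by linarith
      have hd2 : d ^ 2 = 1 := by linarith
      rw [ha', hd2] at hdisc
      linarith
    · have hA : (a + 2) ^ 2 + d ^ 2 = -1 := by linear_combination h + hdisc
      nlinarith [sq_nonneg (a + 2), sq_nonneg d]
  have h0' : (5 : ℤ) ∣ (if k % 2 = 0 then (-7 : ℤ) else -9) := by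
    have : 0 ^ 2 + 2 * a * 0 + (2 * b + 1) = 5 := by linarith
    rwa [this, ← hk] at h0
  rcases em (k % 2 = 0) with h | h <;> simp [h] at h0' <;> omega
end

section
/- For every odd negative integer n, (w+1) divides q_n' in 𝔽₂[w] if and only if (w+1) divides q_{n+6}' in 𝔽₂[w], where ' denotes formal derivative (interpreting q_n for n ∈ {-1,-3,-5} by the base cases); consequently (w+1) divides q_n' mod 2 if and only if 3 | n. -/
open Polynomial

lemma qAux_step (k : ℕ) :
    eval 1 (derivative ((qAux (k+3)).map (Int.castRingHom (ZMod 2)))) =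
    eval 1 (derivative ((qAux k).map (Int.castRingHom (ZMod 2)))) := by
  rw [qAux]
  simp only [Polynomial.map_add, Polynomial.map_mul, Polynomial.map_sub, Polynomial.map_pow,
    Polynomial.map_one, Polynomial.map_X, derivative_add, derivative_mul, derivative_sub,
    derivative_X_pow, derivative_X, derivative_one, eval_add, eval_mul, eval_sub, eval_pow,
    eval_X, eval_one]
  ring_nf
  simp [show (2:ZMod 2)=0 from rfl]

lemma qAux_eval_s10 : ∀ k : ℕ,
    eval 1 (derivative ((qAux k).map (Int.castRingHom (ZMod 2)))) =
      if k % 3 = 1 then 0 else 1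
  | 0 => by simp [qAux]; decide
  | 1 => by simp [qAux]; decide
  | 2 => by simp [qAux]; decide
  | (k + 3) => by
      rw [qAux_step, qAux_eval_s10 k]
      have : (k + 3) % 3 = k % 3 := by omega
      rw [this]

lemma dvd_iff_eval (p : Polynomial (ZMod 2)) : (X + 1) ∣ p ↔ eval 1 p = 0 := by
  have h : (X + 1 : Polynomial (ZMod 2)) = X - C 1 := by
    rw [C_1, sub_eq_add_neg]
    norm_num
    rw [show (-1 : Polynomial (ZMod 2)) = C (-1) by rw [C_neg, C_1], show (-1 : ZMod 2) = 1 from rfl, C_1]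
  rw [h, dvd_iff_isRoot, IsRoot]

/-- For every odd negative integer `n`: if `n ≤ -7` then `(w+1)` divides
`q_n'` in `𝔽₂[w]` iff `(w+1)` divides `q_{n+6}'` in `𝔽₂[w]`; consequently
`(w+1)` divides `q_n'` mod `2` iff `3 ∣ n`. -/
theorem q_deriv_w_add_one_dvd (n : ℤ) (hodd : Odd n) (hneg : n < 0) :
    (n ≤ -7 →
      (((X + 1 : Polynomial (ZMod 2)) ∣
          derivative ((qq n).map (Int.castRingHom (ZMod 2)))) ↔
        ((X + 1 : Polynomial (ZMod 2)) ∣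
          derivative ((qq (n + 6)).map (Int.castRingHom (ZMod 2)))))) ∧
    (((X + 1 : Polynomial (ZMod 2)) ∣
        derivative ((qq n).map (Int.castRingHom (ZMod 2)))) ↔ 3 ∣ n) := by
  obtain ⟨m, rfl⟩ := hodd
  have hm : m ≤ -1 := by omega
  have hdiv : (-1 - (2 * m + 1)) / 2 = -1 - m := by
    rw [show -1 - (2 * m + 1) = 2 * (-1 - m) by ring, Int.mul_ediv_cancel_left _ (by norm_num)]
  set k : ℕ := (-1 - m).toNat with hk
  have hkm : (k : ℤ) = -1 - m := Int.toNat_of_nonneg (by omega)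
  have hq : qq (2 * m + 1) = qAux k := by
    unfold qq; rw [hdiv]
  have key : ∀ p : ℤ, ∀ j : ℕ, qq p = qAux j →
      (((X + 1 : Polynomial (ZMod 2)) ∣
        derivative ((qq p).map (Int.castRingHom (ZMod 2)))) ↔ j % 3 = 1) := by
    intro p j hpj
    rw [hpj, dvd_iff_eval, qAux_eval_s10]
    split <;> simp_all
  constructor
  · intro h7
    have hm4 : m ≤ -4 := by omega
    have hk3 : 3 ≤ k := by omega
    have hq6 : qq (2 * m + 1 + 6) = qAux (k - 3) := by
      unfold qq
      congr 1
      have : (-1 - (2 * m + 1 + 6)) / 2 = -1 - m - 3 := by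
        rw [show -1 - (2 * m + 1 + 6) = 2 * (-1 - m - 3) by ring,
          Int.mul_ediv_cancel_left _ (by norm_num)]
      rw [this]
      omega
    rw [key _ _ hq, key _ _ hq6]
    omega
  · rw [key _ _ hq]
    omega
end

section
/- For odd negative integers n divisible by 3: if n ≡ 3 (mod 4) then w does not divide q_n in 𝔽₃[w]; if n ≡ 1 (mod 4) then w^2 divides q_n in 𝔽₃[w] but w^3 does not. -/
open Polynomial

/-- `qAux k` reduced mod `3`. -/
noncomputable def Q (k : ℕ) : Polynomial (ZMod 3) := (qAux k).map (Int.castRingHom (ZMod 3))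

lemma Qrec (k : ℕ) : Q (k+3) = (Q (k+2) - Q (k+1)) * X^2 - (Q (k+2) - Q (k+1)) + Q k := by
  simp only [Q, qAux, Polynomial.map_add, Polynomial.map_mul, Polynomial.map_sub,
    Polynomial.map_pow, Polynomial.map_one, Polynomial.map_X]
  ring

lemma coeffRec (k : ℕ) :
    (Q (k+3)).coeff 0 = -((Q (k+2)).coeff 0 - (Q (k+1)).coeff 0) + (Q k).coeff 0 ∧
    (Q (k+3)).coeff 1 = -((Q (k+2)).coeff 1 - (Q (k+1)).coeff 1) + (Q k).coeff 1 ∧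
    (Q (k+3)).coeff 2 = ((Q (k+2)).coeff 0 - (Q (k+1)).coeff 0)
      - ((Q (k+2)).coeff 2 - (Q (k+1)).coeff 2) + (Q k).coeff 2 := by
  rw [Qrec]
  refine ⟨?_, ?_, ?_⟩ <;>
  · simp [coeff_mul_X_pow', coeff_sub, coeff_add]
    try ring

lemma Q0 : (Q 0).coeff 0 = 2 ∧ (Q 0).coeff 1 = 2 ∧ (Q 0).coeff 2 = 2 := by
  simp only [Q, qAux, Polynomial.map_add, Polynomial.map_mul, Polynomial.map_sub,
    Polynomial.map_pow, Polynomial.map_ofNat, Polynomial.map_X]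
  refine ⟨?_, ?_, ?_⟩ <;>
    simp [coeff_sub, coeff_add, coeff_X_pow, coeff_X, coeff_ofNat_zero, coeff_ofNat_succ] <;>
    decide

lemma Q1 : (Q 1).coeff 0 = 0 ∧ (Q 1).coeff 1 = 0 ∧ (Q 1).coeff 2 = 2 := by
  simp only [Q, qAux, Polynomial.map_add, Polynomial.map_mul, Polynomial.map_sub,
    Polynomial.map_pow, Polynomial.map_ofNat, Polynomial.map_X]
  refine ⟨?_, ?_, ?_⟩ <;>
    simp [coeff_sub, coeff_add, coeff_X_pow, coeff_X, coeff_ofNat_zero, coeff_ofNat_succ] <;>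
    decide

lemma Q2 : (Q 2).coeff 0 = 2 ∧ (Q 2).coeff 1 = 2 ∧ (Q 2).coeff 2 = 2 := by
  simp only [Q, qAux, Polynomial.map_add, Polynomial.map_mul, Polynomial.map_sub,
    Polynomial.map_pow, Polynomial.map_ofNat, Polynomial.map_X]
  refine ⟨?_, ?_, ?_⟩ <;>
    simp [coeff_sub, coeff_add, coeff_X_pow, coeff_X, coeff_ofNat_zero, coeff_ofNat_succ] <;>
    decide

/-- The period-6 pattern of the three lowest coefficients of `Q k`. -/
def pat : ℕ → ZMod 3 × ZMod 3 × ZMod 3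
  | 0 => (2, 2, 2)
  | 1 => (0, 0, 2)
  | 2 => (2, 2, 2)
  | 3 => (0, 0, 1)
  | 4 => (2, 2, 1)
  | _ => (0, 0, 1)

lemma key_s11 : ∀ k, ((Q k).coeff 0, (Q k).coeff 1, (Q k).coeff 2) = pat (k % 6) := by
  intro k
  induction k using Nat.strong_induction_on with
  | _ k ih =>
    match k with
    | 0 => simpa [pat] using ⟨Q0.1, Q0.2.1, Q0.2.2⟩
    | 1 => simpa [pat] using ⟨Q1.1, Q1.2.1, Q1.2.2⟩
    | 2 => simpa [pat] using ⟨Q2.1, Q2.2.1, Q2.2.2⟩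
    | (k+3) =>
      obtain ⟨h0, h1, h2⟩ := coeffRec k
      have i0 := ih k (by omega)
      have i1 := ih (k+1) (by omega)
      have i2 := ih (k+2) (by omega)
      have e1 : (k+1) % 6 = (k % 6 + 1) % 6 := by omega
      have e2 : (k+2) % 6 = (k % 6 + 2) % 6 := by omega
      have e3 : (k+3) % 6 = (k % 6 + 3) % 6 := by omega
      rw [e1] at i1; rw [e2] at i2; rw [e3]
      have hm : k % 6 = 0 ∨ k % 6 = 1 ∨ k % 6 = 2 ∨ k % 6 = 3 ∨ k % 6 = 4 ∨ k % 6 = 5 := by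
        omega
      rcases hm with h|h|h|h|h|h <;>
      · rw [h] at i0 i1 i2 ⊢
        simp only [pat, Prod.mk.injEq, Nat.reduceAdd, Nat.reduceMod] at i0 i1 i2 ⊢
        refine ⟨?_, ?_, ?_⟩
        · rw [h0, i2.1, i1.1, i0.1]; decide
        · rw [h1, i2.2.1, i1.2.1, i0.2.1]; decide
        · rw [h2, i2.1, i1.1, i2.2.2, i1.2.2, i0.2.2]; decide

/-- For odd negative integers `n` divisible by `3`: if `n ≡ 3 (mod 4)` then
`w` does not divide `q_n` in `𝔽₃[w]`; if `n ≡ 1 (mod 4)` then `w^2` divides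
`q_n` in `𝔽₃[w]` but `w^3` does not. -/
theorem q_mod_three_w_divisibility (n : ℤ) (hodd : Odd n) (hneg : n < 0)
    (h3 : 3 ∣ n) :
    (n % 4 = 3 → ¬ (X : Polynomial (ZMod 3)) ∣ (qq n).map (Int.castRingHom (ZMod 3))) ∧
    (n % 4 = 1 →
      ((X : Polynomial (ZMod 3)) ^ 2 ∣ (qq n).map (Int.castRingHom (ZMod 3)) ∧
       ¬ (X : Polynomial (ZMod 3)) ^ 3 ∣ (qq n).map (Int.castRingHom (ZMod 3)))) := by
  obtain ⟨m, hm⟩ := hodd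
  set k : ℕ := ((-1 - n) / 2).toNat with hk
  have hdiv : (-1 - n) / 2 = -1 - m := by
    have : -1 - n = 2 * (-1 - m) := by omega
    rw [this, Int.mul_ediv_cancel_left _ two_ne_zero]
  have hkz : (k : ℤ) = -1 - m := by
    rw [hk, hdiv]; omega
  have hQ : (qq n).map (Int.castRingHom (ZMod 3)) = Q k := by rw [qq, Q, hk]
  have hkey := key_s11 k
  constructor
  · intro h4
    have hk6 : k % 6 = 4 := by omega
    rw [hk6] at hkey
    simp only [pat, Prod.mk.injEq] at hkey
    rw [hQ, X_dvd_iff]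
    rw [hkey.1]
    decide
  · intro h4
    have hk6 : k % 6 = 1 := by omega
    rw [hk6] at hkey
    simp only [pat, Prod.mk.injEq] at hkey
    rw [hQ]
    constructor
    · rw [X_pow_dvd_iff]
      intro d hd
      interval_cases d
      · exact hkey.1
      · exact hkey.2.1
    · rw [X_pow_dvd_iff]
      intro hc
      have := hc 2 (by omega)
      rw [hkey.2.2] at this
      exact absurd this (by decide)
end

section
/- For every odd negative integer n divisible by 3, q_n - (1 - w)·q_n' ≡ -w (mod 3), where q_n' is the formal derivative. -/
open Polynomial

private lemma qAux_rec (k : ℕ) :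
    qAux (k + 3) = (X ^ 2 - 1) * (qAux (k + 2) - qAux (k + 1)) + qAux k := rfl

/-- `F1 B G = X^2 + (X + X*B - G)^3` modulo 3. -/
private noncomputable def F1 (B G : Polynomial ℤ) : Polynomial ℤ :=
  X^2 + X^3 + X^3*B^3 - G^3
private noncomputable def F2 (B G : Polynomial ℤ) : Polynomial ℤ :=
  1 + X^3 + G^3 + X*B^3 + X^2*G^3
private noncomputable def F3 (B G : Polynomial ℤ) : Polynomial ℤ :=
  X^3 - G^3 + X*B^3 - X^4 + X^4*G^3 - X^2 - X^2*G^3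

private noncomputable def D1 (B G : Polynomial ℤ) : Polynomial ℤ :=
  -G - G^2 + X*B + 2*X*B*G + X*B*G^2 - X^2 - X^2*G + X^2*G^2 + X^2*G^3 - X^2*B^2
  - X^2*B^2*G + 2*X^3*B - 2*X^3*B*G^2 + X^3*B^3 - X^4 + X^4*G + X^4*G^2 - 2*X^4*G^3
  - 2*X^4*B^2 + 2*X^4*B^2*G + 2*X^5*B - 4*X^5*B*G + 2*X^5*B*G^2 - X^6 + 2*X^6*G
  - 2*X^6*G^2 + X^6*G^3

private noncomputable def D2 (B G : Polynomial ℤ) : Polynomial ℤ :=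
  X*B^3 + 2*X^2*G + 2*X^2*G^2 + X^2*G^3 - X^2*B^2 + X^2*B^2*G - X^3*B - 6*X^3*B*G
  - X^3*B*G^2 + 2*X^4 + 3*X^4*G - 3*X^4*G^2 - X^4*G^3 + X^4*B^2 + 3*X^4*B^2*G
  - 3*X^5*B - 2*X^5*B*G + 5*X^5*B*G^2 - X^5*B^3 + 2*X^6 - X^6*G - 3*X^6*G^2
  + 2*X^6*G^3 + 3*X^6*B^2 - 3*X^6*B^2*G - 3*X^7*B + 6*X^7*B*G - 3*X^7*B*G^2 + X^8
  - 3*X^8*G + 3*X^8*G^2 - X^8*G^3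

private noncomputable def D3 (B G : Polynomial ℤ) : Polynomial ℤ :=
  G + G^2 - X*B - 2*X*B*G - X*B*G^2 + X*B^3 + X^2 - X^2*G - 3*X^2*G^2 - 2*X^2*G^3
  - X^2*B^2 + 3*X^2*B^2*G + 2*X^3*B + 6*X^3*B*G^2 - X^3*B^3 - 2*X^4 - X^4*G
  - X^4*G^2 + 4*X^4*G^3 + X^4*B^2 - 5*X^4*B^2*G + X^5*B + 6*X^5*B*G - 7*X^5*B*G^2
  + X^5*B^3 - X^6 - X^6*G + 5*X^6*G^2 - 3*X^6*G^3 - 3*X^6*B^2 + 3*X^6*B^2*G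
  + 3*X^7*B - 6*X^7*B*G + 3*X^7*B*G^2 - X^8 + 3*X^8*G - 3*X^8*G^2 + X^8*G^3

private lemma qAux_inv (m : ℕ) : ∃ B G E1 E2 E3 : Polynomial ℤ,
    (X - 1) * qAux (3*m+1) = F1 B G + 3*E1 ∧
    (X - 1) * qAux (3*m+2) = F2 B G + 3*E2 ∧
    (X - 1) * qAux (3*m+3) = F3 B G + 3*E3 := by
  induction m with
  | zero =>
    refine ⟨-X, X^2,
      3 - 4*X - X^2 + 2*X^3 - X^5 + X^6,
      2 - 3*X + 3*X^2 - 4*X^3 - X^4 + 4*X^5 - X^6 - X^7,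
      3 - 4*X - 3*X^2 + 6*X^3 + 6*X^4 - 11*X^5 + 6*X^7 - X^8 - X^9, ?_, ?_, ?_⟩
    · show (X - 1) * qAux 1 = _
      unfold qAux F1; ring
    · show (X - 1) * qAux 2 = _
      unfold qAux F2; ring
    · show (X - 1) * qAux (0 + 3) = _
      rw [qAux_rec]
      unfold qAux F3; ring
  | succ m ih =>
    obtain ⟨B, G, E1, E2, E3, h1, h2, h3⟩ := ih
    refine ⟨X - X*G - B, -1 - X^2 + (X^2-1)*G + X*B,
      (X^2-1)*(E3-E2) + E1 + D1 B G,
      (X^2-1)*(((X^2-1)*(E3-E2) + E1 + D1 B G) - E3) + E2 + D2 B G,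
      (X^2-1)*((((X^2-1)*(((X^2-1)*(E3-E2) + E1 + D1 B G) - E3) + E2 + D2 B G))
        - ((X^2-1)*(E3-E2) + E1 + D1 B G)) + E3 + D3 B G, ?_, ?_, ?_⟩
    · have e : 3*(m+1)+1 = (3*m+1) + 3 := by ring
      rw [e, qAux_rec, show 3*m+1+2 = 3*m+3 from by ring, show 3*m+1+1 = 3*m+2 from by ring]
      unfold F1 F2 F3 D1 at *
      linear_combination (X^2-1 : Polynomial ℤ) * h3 - (X^2-1 : Polynomial ℤ) * h2 + h1
    · have e : 3*(m+1)+2 = (3*m+2) + 3 := by ring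
      have h1' : (X - 1) * qAux (3*(m+1)+1) = F1 (X - X*G - B) (-1 - X^2 + (X^2-1)*G + X*B)
          + 3*((X^2-1)*(E3-E2) + E1 + D1 B G) := by
        have e : 3*(m+1)+1 = (3*m+1) + 3 := by ring
        rw [e, qAux_rec, show 3*m+1+2 = 3*m+3 from by ring, show 3*m+1+1 = 3*m+2 from by ring]
        unfold F1 F2 F3 D1 at *
        linear_combination (X^2-1 : Polynomial ℤ) * h3 - (X^2-1 : Polynomial ℤ) * h2 + h1
      rw [e, qAux_rec, show 3*m+2+2 = 3*(m+1)+1 from by ring, show 3*m+2+1 = 3*m+3 from by ring]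
      unfold F1 F2 F3 D2 at *
      linear_combination (X^2-1 : Polynomial ℤ) * h1' - (X^2-1 : Polynomial ℤ) * h3 + h2
    · have h1' : (X - 1) * qAux (3*(m+1)+1) = F1 (X - X*G - B) (-1 - X^2 + (X^2-1)*G + X*B)
          + 3*((X^2-1)*(E3-E2) + E1 + D1 B G) := by
        have e : 3*(m+1)+1 = (3*m+1) + 3 := by ring
        rw [e, qAux_rec, show 3*m+1+2 = 3*m+3 from by ring, show 3*m+1+1 = 3*m+2 from by ring]
        unfold F1 F2 F3 D1 at *
        linear_combination (X^2-1 : Polynomial ℤ) * h3 - (X^2-1 : Polynomial ℤ) * h2 + h1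
      have h2' : (X - 1) * qAux (3*(m+1)+2) = F2 (X - X*G - B) (-1 - X^2 + (X^2-1)*G + X*B)
          + 3*((X^2-1)*(((X^2-1)*(E3-E2) + E1 + D1 B G) - E3) + E2 + D2 B G) := by
        have e : 3*(m+1)+2 = (3*m+2) + 3 := by ring
        rw [e, qAux_rec, show 3*m+2+2 = 3*(m+1)+1 from by ring, show 3*m+2+1 = 3*m+3 from by ring]
        unfold F1 F2 F3 D2 at *
        linear_combination (X^2-1 : Polynomial ℤ) * h1' - (X^2-1 : Polynomial ℤ) * h3 + h2
      have e : 3*(m+1)+3 = (3*m+3) + 3 := by ring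
      rw [e, qAux_rec, show 3*m+3+2 = 3*(m+1)+2 from by ring, show 3*m+3+1 = 3*(m+1)+1 from by ring]
      unfold F1 F2 F3 D3 at *
      linear_combination (X^2-1 : Polynomial ℤ) * h2' - (X^2-1 : Polynomial ℤ) * h1' + h3

/-- For every odd negative integer `n` divisible by `3`,
`q_n - (1 - w) * q_n' ≡ -w (mod 3)`, i.e. equality holds in `𝔽₃[w]`. -/
theorem q_deriv_identity_mod_three (n : ℤ) (hodd : Odd n) (hneg : n < 0)
    (h3 : 3 ∣ n) :
    (qq n).map (Int.castRingHom (ZMod 3)) -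
        (1 - X) * derivative ((qq n).map (Int.castRingHom (ZMod 3))) =
      -X := by
  obtain ⟨j, hj⟩ := hodd
  obtain ⟨t, ht⟩ := h3
  obtain ⟨m, hm⟩ : ∃ m : ℕ, n = -(6*(m:ℤ)+3) := ⟨((-3-n)/6).toNat, by omega⟩
  have hk : ((-1 - n) / 2).toNat = 3*m+1 := by omega
  unfold qq
  rw [hk]
  obtain ⟨B, G, E1, E2, E3, h1, h2, h3⟩ := qAux_inv m
  set φ := Int.castRingHom (ZMod 3)
  have h30 : (3 : Polynomial (ZMod 3)) = 0 := by
    rw [← map_ofNat (C : ZMod 3 →+* Polynomial (ZMod 3)) 3,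
      show ((3 : ZMod 3)) = 0 from rfl, map_zero]
  have H := congrArg (Polynomial.map φ) h1
  simp only [F1, Polynomial.map_mul, Polynomial.map_add, Polynomial.map_sub,
    Polynomial.map_pow, Polynomial.map_X, Polynomial.map_one, Polynomial.map_ofNat] at H
  rw [h30] at H
  have HD := congrArg derivative H
  simp only [derivative_mul, derivative_add, derivative_sub, derivative_pow,
    derivative_X, derivative_one, zero_mul, mul_one, mul_zero, add_zero, zero_add,
    sub_zero, zero_sub] at HD
  have e3 : (C (((3:ℕ) : ZMod 3)) : Polynomial (ZMod 3)) = 0 := by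
    rw [show (((3:ℕ)) : ZMod 3) = 0 from rfl, map_zero]
  rw [e3] at HD
  simp only [zero_mul, mul_zero, add_zero, zero_add, sub_zero] at HD
  have e2 : (C (((2:ℕ) : ZMod 3)) : Polynomial (ZMod 3)) = 2 := by
    rw [show (((2:ℕ)) : ZMod 3) = 2 from rfl, map_ofNat]
  rw [e2] at HD
  linear_combination HD + X * h30
end

section
/- For every odd negative integer n divisible by 3, the following identity holds in 𝔽₃[w]: q_{n+2} - q_{n+4} + (w^2 - 1)(q_{n+2}' - q_{n+4}') ≡ 0 (mod 3). -/
open Polynomial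

/-- `aa k` is the reduction mod 3 of `qAux (k+1) - qAux k`. -/
noncomputable def aa : ℕ → Polynomial (ZMod 3)
  | 0 => (qAux 1 - qAux 0).map (Int.castRingHom (ZMod 3))
  | 1 => (qAux 2 - qAux 1).map (Int.castRingHom (ZMod 3))
  | (n + 2) => (X ^ 2 + 1) * aa (n + 1) - aa n

lemma three_eq_zero : (3 : Polynomial (ZMod 3)) = 0 := by
  rw [← map_ofNat (C : ZMod 3 →+* Polynomial (ZMod 3)) 3, show (3 : ZMod 3) = 0 by decide,
    map_zero]

lemma aa_eq (k : ℕ) :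
    aa k = (qAux (k + 1)).map (Int.castRingHom (ZMod 3)) -
      (qAux k).map (Int.castRingHom (ZMod 3)) := by
  induction k using Nat.twoStepInduction with
  | zero => rw [aa, Polynomial.map_sub]
  | one => rw [aa, Polynomial.map_sub]
  | more n ih1 ih2 =>
    rw [show n + 2 + 1 = n + 3 from rfl, aa, ih1, ih2,
      show qAux (n + 3) = (X ^ 2 - 1) * (qAux (n + 2) - qAux (n + 1)) + qAux n from rfl]
    simp only [Polynomial.map_add, Polynomial.map_sub, Polynomial.map_mul, Polynomial.map_pow,
      Polynomial.map_one, Polynomial.map_X]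
    linear_combination ((qAux (n + 2)).map (Int.castRingHom (ZMod 3)) -
      (qAux (n + 1)).map (Int.castRingHom (ZMod 3))) * three_eq_zero

lemma aa_rec (n : ℕ) : aa (n + 2) = (X ^ 2 + 1) * aa (n + 1) - aa n := rfl

lemma aa_step6 (n : ℕ) : aa (n + 6) = (X ^ 6 + 1) * aa (n + 3) - aa n := by
  have e6 : aa (n + 6) = (X ^ 2 + 1) * aa (n + 5) - aa (n + 4) := aa_rec (n + 4)
  have e5 : aa (n + 5) = (X ^ 2 + 1) * aa (n + 4) - aa (n + 3) := aa_rec (n + 3)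
  have e4 : aa (n + 4) = (X ^ 2 + 1) * aa (n + 3) - aa (n + 2) := aa_rec (n + 2)
  have e3 : aa (n + 3) = (X ^ 2 + 1) * aa (n + 2) - aa (n + 1) := aa_rec (n + 1)
  have e2 : aa (n + 2) = (X ^ 2 + 1) * aa (n + 1) - aa n := aa_rec n
  rw [e6, e5, e4, e3, e2]
  linear_combination (((-2 : Polynomial (ZMod 3)) * X ^ 2 + (-1) * X ^ 4 + 2 * X ^ 6 + X ^ 8) *
      aa (n + 1)
    + ((1 : Polynomial (ZMod 3)) + X ^ 2 + (-1) * X ^ 4 + (-1) * X ^ 6) * aa n) * three_eq_zero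

lemma aa0_eq : aa 0 = 1 + X + X ^ 4 + X ^ 5 := by
  rw [aa, show qAux 1 = X ^ 5 - 2 * X ^ 4 - 2 * X ^ 3 + 5 * X ^ 2 + 3 * X - 9 from rfl,
      show qAux 0 = X ^ 3 - X ^ 2 + 2 * X - 7 from rfl]
  simp only [Polynomial.map_sub, Polynomial.map_add, Polynomial.map_mul, Polynomial.map_pow,
    Polynomial.map_one, Polynomial.map_X, Polynomial.map_ofNat]
  linear_combination ((-1 : Polynomial (ZMod 3)) + 2 * X ^ 2 + (-1) * X ^ 3 + (-1) * X ^ 4) *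
    three_eq_zero

lemma aa1_eq : aa 1 = 2 + 2 * X + X ^ 4 + X ^ 5 + X ^ 6 + X ^ 7 := by
  rw [aa, show qAux 2 =
        X ^ 7 - 2 * X ^ 6 - 4 * X ^ 5 + 8 * X ^ 4 + 4 * X ^ 3 - 7 * X ^ 2 + 2 * X - 7 from rfl,
      show qAux 1 = X ^ 5 - 2 * X ^ 4 - 2 * X ^ 3 + 5 * X ^ 2 + 3 * X - 9 from rfl]
  simp only [Polynomial.map_sub, Polynomial.map_add, Polynomial.map_mul, Polynomial.map_pow,
    Polynomial.map_one, Polynomial.map_X, Polynomial.map_ofNat]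
  linear_combination ((-1 : Polynomial (ZMod 3)) * X + (-4) * X ^ 2 + 2 * X ^ 3 + 3 * X ^ 4
    + (-2) * X ^ 5 + (-1) * X ^ 6) * three_eq_zero

lemma aa2_eq : aa 2 = 1 + X + 2 * X ^ 2 + 2 * X ^ 3 + 2 * X ^ 6 + 2 * X ^ 7 + X ^ 8 + X ^ 9 := by
  rw [aa_rec 0, aa1_eq, aa0_eq]; ring

lemma aa5_eq :
    aa 5 = 2 + 2 * X + X ^ 2 + X ^ 3 + 2 * X ^ 12 + 2 * X ^ 13 + X ^ 14 + X ^ 15 := by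
  rw [aa_rec 3, aa_rec 2, aa_rec 1, aa_rec 0, aa1_eq, aa0_eq]
  linear_combination ((-1 : Polynomial (ZMod 3)) + (-1) * X + (-2) * X ^ 2 + (-2) * X ^ 3 + X ^ 4
    + X ^ 5 + X ^ 6 + X ^ 7 + 2 * X ^ 10 + 2 * X ^ 11 + X ^ 12 + X ^ 13) * three_eq_zero

lemma P2 : aa 2 + (X ^ 2 - 1) * derivative (aa 2) = 0 := by
  rw [aa2_eq]
  simp only [derivative_add, derivative_one, derivative_X, derivative_mul, derivative_X_pow,
    derivative_ofNat, C_eq_natCast, Nat.cast_ofNat, map_ofNat]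
  linear_combination ((-1 : Polynomial (ZMod 3)) * X + (-1) * X ^ 2 + 2 * X ^ 3 + 2 * X ^ 4
    + (-4) * X ^ 5 + (-4) * X ^ 6 + 2 * X ^ 7 + 2 * X ^ 8 + 3 * X ^ 9 + 3 * X ^ 10) * three_eq_zero

lemma P5 : aa 5 + (X ^ 2 - 1) * derivative (aa 5) = 0 := by
  rw [aa5_eq]
  simp only [derivative_add, derivative_one, derivative_X, derivative_mul, derivative_X_pow,
    derivative_ofNat, C_eq_natCast, Nat.cast_ofNat, map_ofNat]
  linear_combination ((X : Polynomial (ZMod 3)) ^ 3 + X ^ 4 + (-8) * X ^ 11 + (-8) * X ^ 12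
    + 4 * X ^ 13 + 4 * X ^ 14 + 5 * X ^ 15 + 5 * X ^ 16) * three_eq_zero

lemma P_all (j : ℕ) : aa (3 * j + 2) + (X ^ 2 - 1) * derivative (aa (3 * j + 2)) = 0 := by
  induction j using Nat.twoStepInduction with
  | zero => exact P2
  | one => exact P5
  | more j ih1 ih2 =>
    have e : 3 * (j + 2) + 2 = (3 * j + 2) + 6 := by ring
    rw [e, aa_step6]
    have hd : derivative ((X ^ 6 + 1 : Polynomial (ZMod 3)) * aa (3 * j + 2 + 3) -
        aa (3 * j + 2)) =
        (X ^ 6 + 1) * derivative (aa (3 * j + 2 + 3)) - derivative (aa (3 * j + 2)) := by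
      simp only [derivative_sub, derivative_mul, derivative_add, derivative_one, derivative_X_pow,
        C_eq_natCast, Nat.cast_ofNat, map_ofNat]
      linear_combination (2 * X ^ 5 * aa (3 * j + 2 + 3)) * three_eq_zero
    rw [hd]
    have e2 : 3 * j + 2 + 3 = 3 * (j + 1) + 2 := by ring
    rw [e2]
    linear_combination (X ^ 6 + 1) * ih2 - ih1

/-- For every odd negative integer `n ≤ -5` divisible by `3`, in `𝔽₃[w]`:
`q_{n+2} - q_{n+4} + (w^2 - 1)(q_{n+2}' - q_{n+4}') ≡ 0 (mod 3)`. -/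
theorem q_pair_identity_mod_three (n : ℤ) (hodd : Odd n) (hle : n ≤ -5)
    (h3 : 3 ∣ n) :
    (qq (n + 2)).map (Int.castRingHom (ZMod 3)) -
        (qq (n + 4)).map (Int.castRingHom (ZMod 3)) +
      (X ^ 2 - 1) *
        (derivative ((qq (n + 2)).map (Int.castRingHom (ZMod 3))) -
          derivative ((qq (n + 4)).map (Int.castRingHom (ZMod 3)))) = 0 := by
  obtain ⟨k, hk⟩ := hodd
  obtain ⟨t, ht⟩ := h3
  obtain ⟨j, hj⟩ : ∃ j : ℕ, n = -(6 * (j : ℤ) + 9) := ⟨(-(n + 9) / 6).toNat, by omega⟩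
  have e1 : ((-1 - (n + 2)) / 2).toNat = 3 * j + 3 := by omega
  have e2 : ((-1 - (n + 4)) / 2).toNat = 3 * j + 2 := by omega
  rw [qq, qq, e1, e2]
  have key := P_all j
  rw [aa_eq, derivative_sub] at key
  linear_combination key
end

section
/- For every odd negative integer n divisible by 3 with n ≡ 1 (mod 4), q_n has no monic quadratic factor in ℤ[w] that reduces to w^2 modulo 3. -/
open Polynomial

/-- The modulus `X(X-1)(X+1)(X-2)(X²-3)`. -/
noncomputable def Mpoly : Polynomial ℤ :=
  X * (X - 1) * (X + 1) * (X - 2) * (X ^ 2 - 3)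

lemma qAux_period : ∀ k : ℕ, Mpoly ∣ qAux (k + 6) - qAux k
  | 0 => ⟨5 * X - 20 * X ^ 3 + 21 * X ^ 5 - 8 * X ^ 7 + X ^ 9, by
      show qAux 6 - qAux 0 = _
      simp only [qAux, Mpoly]; ring⟩
  | 1 => ⟨-6 * X + 35 * X ^ 3 - 56 * X ^ 5 + 36 * X ^ 7 - 10 * X ^ 9 + X ^ 11, by
      show qAux 7 - qAux 1 = _
      simp only [qAux, Mpoly]; ring⟩
  | 2 => ⟨7 * X - 56 * X ^ 3 + 126 * X ^ 5 - 120 * X ^ 7 + 55 * X ^ 9 - 12 * X ^ 11 + X ^ 13, by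
      show qAux 8 - qAux 2 = _
      simp only [qAux, Mpoly]; ring⟩
  | (k + 3) => by
      have h0 := qAux_period k
      have h1 := qAux_period (k + 1)
      have h2 := qAux_period (k + 2)
      have r : ∀ j : ℕ, qAux (j + 3) = (X ^ 2 - 1) * (qAux (j + 2) - qAux (j + 1)) + qAux j :=
        fun j => by rw [qAux]
      have e : qAux (k + 3 + 6) - qAux (k + 3) =
          (X ^ 2 - 1) * ((qAux (k + 2 + 6) - qAux (k + 2)) - (qAux (k + 1 + 6) - qAux (k + 1)))
            + (qAux (k + 6) - qAux k) := by
        have e1 : k + 3 + 6 = (k + 6) + 3 := by ring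
        rw [e1, r (k + 6), r k]
        have e2 : k + 6 + 2 = (k + 2) + 6 := by ring
        have e3 : k + 6 + 1 = (k + 1) + 6 := by ring
        rw [e2, e3]
        ring
      rw [e]
      exact dvd_add (Dvd.dvd.mul_left (dvd_sub h2 h1) _) h0

lemma qAux_mod : ∀ m : ℕ, Mpoly ∣ qAux (6 * m + 1) - qAux 1
  | 0 => by simp
  | (m + 1) => by
      have h1 := qAux_mod m
      have h2 := qAux_period (6 * m + 1)
      have e : qAux (6 * (m + 1) + 1) - qAux 1 =
          (qAux (6 * m + 1 + 6) - qAux (6 * m + 1)) + (qAux (6 * m + 1) - qAux 1) := by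
        ring_nf
      rw [e]
      exact dvd_add h2 h1

/-- For every odd negative integer `n` divisible by `3` with `n ≡ 1 (mod 4)`,
`q_n` has no monic quadratic factor in `ℤ[w]` reducing to `w^2` mod `3`. -/
theorem q_no_quadratic_factor_w_sq_mod_three (n : ℤ) (hodd : Odd n)
    (hneg : n < 0) (h3 : 3 ∣ n) (h4 : n % 4 = 1) :
    ¬ ∃ f : Polynomial ℤ, f.Monic ∧ f.natDegree = 2 ∧ f ∣ qq n ∧
      f.map (Int.castRingHom (ZMod 3)) = X ^ 2 := by
  rintro ⟨f, hmon, hdeg, hdvd, hmap⟩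
  -- `qq n = qAux (6m+1)` for some `m`
  obtain ⟨t, ht⟩ := hodd
  obtain ⟨s, hs⟩ := h3
  obtain ⟨m, hm⟩ : ∃ m : ℕ, ((-1 - n) / 2).toNat = 6 * m + 1 := by
    have h1 : (-1 - n) / 2 = -1 - t := by omega
    rw [h1]
    refine ⟨((-1 - t).toNat) / 6, ?_⟩
    omega
  have hq : qq n = qAux (6 * m + 1) := by rw [qq, hm]
  have hkey : Mpoly ∣ qq n - qAux 1 := hq ▸ qAux_mod m
  -- coefficients of f
  set a := f.coeff 1 with ha
  set b := f.coeff 0 with hb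
  have hc2 : f.coeff 2 = 1 := by
    have := hmon.leadingCoeff
    rwa [Polynomial.leadingCoeff, hdeg] at this
  -- 3 ∣ a and 3 ∣ b
  have hcoeffmap : ∀ i : ℕ, (f.map (Int.castRingHom (ZMod 3))).coeff i = ((f.coeff i : ℤ) : ZMod 3) := by
    intro i; rw [Polynomial.coeff_map]; rfl
  have h3a : (3 : ℤ) ∣ a := by
    have := hcoeffmap 1
    rw [hmap] at this
    simp at this
    exact (ZMod.intCast_zmod_eq_zero_iff_dvd a 3).mp this.symm
  have h3b : (3 : ℤ) ∣ b := by
    have := hcoeffmap 0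
    rw [hmap] at this
    simp at this
    exact (ZMod.intCast_zmod_eq_zero_iff_dvd b 3).mp this.symm
  -- evaluation of f
  have hfeval : ∀ c : ℤ, f.eval c = c ^ 2 + a * c + b := by
    intro c
    rw [Polynomial.eval_eq_sum_range, hdeg]
    simp [Finset.sum_range_succ, hc2, ← ha, ← hb]
    ring
  -- evaluations of qq n
  have hMeval : ∀ c : ℤ, Mpoly.eval c = c * (c-1) * (c+1) * (c-2) * (c^2 - 3) := by
    intro c; simp [Mpoly]
  have hqeval : ∀ c : ℤ, Mpoly.eval c = 0 → (qq n).eval c = (qAux 1).eval c := by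
    intro c hc
    obtain ⟨u, hu⟩ := hkey
    have h := congrArg (Polynomial.eval c) hu
    simp only [Polynomial.eval_sub, Polynomial.eval_mul, hc, zero_mul] at h
    linarith
  have e0 : (qq n).eval 0 = -9 := by
    rw [hqeval 0 (by simp [Mpoly])]; simp [qAux]
  have e1 : (qq n).eval 1 = -4 := by
    rw [hqeval 1 (by simp [Mpoly])]; simp [qAux]
  have em1 : (qq n).eval (-1) = -8 := by
    rw [hqeval (-1) (by simp [Mpoly])]; simp [qAux]
  have e2 : (qq n).eval 2 = 1 := by
    rw [hqeval 2 (by simp [Mpoly])]; simp [qAux]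
  -- divisibility constraints on a, b
  have d0 : b ∣ -9 := by
    have := Polynomial.eval_dvd (x := (0 : ℤ)) hdvd
    rwa [hfeval 0, e0, (by ring : (0:ℤ)^2 + a * 0 + b = b)] at this
  have d1 : (1 + a + b) ∣ -4 := by
    have := Polynomial.eval_dvd (x := (1 : ℤ)) hdvd
    rwa [hfeval 1, e1, (by ring : (1:ℤ)^2 + a * 1 + b = 1 + a + b)] at this
  have dm1 : (1 - a + b) ∣ -8 := by
    have := Polynomial.eval_dvd (x := (-1 : ℤ)) hdvd
    rwa [hfeval (-1), em1, (by ring : (-1:ℤ)^2 + a * (-1) + b = 1 - a + b)] at this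
  have d2 : (4 + 2 * a + b) ∣ 1 := by
    have := Polynomial.eval_dvd (x := (2 : ℤ)) hdvd
    rwa [hfeval 2, e2, (by ring : (2:ℤ)^2 + a * 2 + b = 4 + 2 * a + b)] at this
  -- pin down a and b
  have hb9 : b ∣ 9 := (dvd_neg).mp d0
  have hun : 4 + 2 * a + b = 1 ∨ 4 + 2 * a + b = -1 :=
    Int.isUnit_iff.mp (isUnit_of_dvd_one d2)
  have hble : b ≤ 9 := Int.le_of_dvd (by norm_num) hb9
  have hbge : -9 ≤ b := by
    have := Int.le_of_dvd (by norm_num) ((neg_dvd).mpr hb9)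
    linarith
  have hbcases : b = 3 ∨ b = -3 ∨ b = 9 ∨ b = -9 := by
    interval_cases b <;> omega
  have hab : a = 0 ∧ b = -3 := by
    rcases hbcases with hb' | hb' | hb' | hb'
    · -- b = 3 forces a = -3, contradicting (1 - a + b) ∣ -8
      have ha' : a = -3 := by omega
      rw [ha', hb'] at dm1
      norm_num at dm1
    · exact ⟨by omega, hb'⟩
    · -- b = 9 forces a = -6, contradicting (1 - a + b) ∣ -8
      have ha' : a = -6 := by omega
      rw [ha', hb'] at dm1
      norm_num at dm1
    · -- b = -9 forces a = 3, contradicting (1 + a + b) ∣ -4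
      have ha' : a = 3 := by omega
      rw [ha', hb'] at d1
      norm_num at d1
  -- hence f = X^2 - 3
  have hf : f = X ^ 2 - C 3 := by
    ext i
    match i with
    | 0 => simp [← hb, hab.2]
    | 1 => simp [← ha, hab.1]
    | 2 => simp [hc2]
    | (i + 3) =>
      rw [Polynomial.coeff_eq_zero_of_natDegree_lt (by rw [hdeg]; omega)]
      simp [Polynomial.coeff_X_pow]
  -- X^2 - 3 divides qq n and qq n ≡ 6X - 12 mod X^2 - 3, contradiction by degrees
  have hC : (C 3 : Polynomial ℤ) = 3 := by norm_num
  have hQdvd : (X ^ 2 - C 3 : Polynomial ℤ) ∣ qq n := hf ▸ hdvd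
  have h23 : (X ^ 2 - C 3 : Polynomial ℤ) ∣ Mpoly :=
    ⟨X * (X - 1) * (X + 1) * (X - 2), by rw [Mpoly, hC]; ring⟩
  have h24 : (X ^ 2 - C 3 : Polynomial ℤ) ∣ qq n - qAux 1 := h23.trans hkey
  have h25 : (X ^ 2 - C 3 : Polynomial ℤ) ∣ qAux 1 - (6 * X - 12) :=
    ⟨X ^ 3 - 2 * X ^ 2 + X - 1, by rw [hC]; simp only [qAux]; ring⟩
  have h26 : (X ^ 2 - C 3 : Polynomial ℤ) ∣ (6 * X - 12 : Polynomial ℤ) := by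
    have e : (6 * X - 12 : Polynomial ℤ) =
        qq n - (qq n - qAux 1) - (qAux 1 - (6 * X - 12)) := by ring
    rw [e]
    exact dvd_sub (dvd_sub hQdvd h24) h25
  have hne : (6 * X - 12 : Polynomial ℤ) ≠ 0 := by
    intro h
    have := congrArg (Polynomial.eval 0) h
    simp at this
  have hled := Polynomial.natDegree_le_of_dvd h26 hne
  have hd2' : (X ^ 2 - C 3 : Polynomial ℤ).natDegree = 2 := by compute_degree!
  have hd1' : (6 * X - 12 : Polynomial ℤ).natDegree ≤ 1 := by compute_degree
  omega
end

section
/- For every odd negative integer n, p_n(1) ≡ -1 (mod 3) and p_n(-1) ≡ (-1)^{-(n+1)/2} (mod 3). -/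
open Polynomial

lemma pAux_eval_mod_three (k : ℕ) :
    (pAux k).eval 1 ≡ -1 [ZMOD 3] ∧ (pAux k).eval (-1) ≡ (-1) ^ k [ZMOD 3] := by
  induction k using Nat.twoStepInduction with
  | zero => constructor <;> simp [pAux] <;> decide
  | one => constructor <;> simp [pAux] <;> decide
  | more k ih1 ih2 =>
    obtain ⟨a1, a2⟩ := ih1
    obtain ⟨b1, b2⟩ := ih2
    constructor
    · simp only [pAux, eval_neg, eval_add, eval_mul, eval_pow, eval_X, eval_ofNat,
        Int.ModEq] at *
      omega
    · rcases neg_one_pow_eq_or ℤ k with h | h <;>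
        simp only [pAux, eval_neg, eval_add, eval_mul, eval_pow, eval_X, eval_ofNat,
          Int.ModEq, pow_succ, h, mul_one, mul_neg, neg_neg, one_mul] at a2 b2 ⊢ <;>
      omega

/-- For every odd negative integer `n`, `p_n(1) ≡ -1 (mod 3)` and
`p_n(-1) ≡ (-1)^(-(n+1)/2) (mod 3)`. -/
theorem p_eval_pm_one_mod_three (n : ℤ) (hodd : Odd n) (hneg : n < 0) :
    (pp n).eval 1 ≡ -1 [ZMOD 3] ∧
    (pp n).eval (-1) ≡ (-1) ^ ((-(n + 1)) / 2).toNat [ZMOD 3] := by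
  rw [pp, if_pos hneg]
  have h : -(n + 1) = -1 - n := by ring
  rw [h]
  exact pAux_eval_mod_three _
end

section
/- For every odd negative integer n, with k = (1-n)/2, the following identity holds in 𝔽₃[v][b]/(b^2 - (v^2-1)(v^2-v-1)): v·b·p_n ≡ (a+b)^k - (a-b)^k - (a+b)^{k+2} + (a-b)^{k+2}, where a = v^2 + v - 1. -/
open Polynomial

open AdjoinRoot in
lemma pAux_key (f : Polynomial (Polynomial (ZMod 3)))
    (hf : f = X ^ 2 - C ((X ^ 2 - 1) * (X ^ 2 - X - 1))) (m : ℕ) :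
    (of f X) * (root f) * (of f ((pAux m).map (Int.castRingHom (ZMod 3)))) =
      (of f (X ^ 2 + X - 1) + root f) ^ (m + 1) -
        (of f (X ^ 2 + X - 1) - root f) ^ (m + 1) -
        (of f (X ^ 2 + X - 1) + root f) ^ (m + 3) +
        (of f (X ^ 2 + X - 1) - root f) ^ (m + 3) := by
  have h3 : (3 : AdjoinRoot f) = 0 := by
    have h : ((3 : ℕ) : (ZMod 3)[X]) = 0 := by
      rw [← C_eq_natCast, ZMod.natCast_self, map_zero]
    have h' : (3 : (ZMod 3)[X]) = 0 := by exact_mod_cast h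
    calc (3 : AdjoinRoot f) = of f 3 := by rw [map_ofNat]
      _ = 0 := by rw [h', map_zero]
  have hb : (root f) ^ 2 = of f ((X ^ 2 - 1) * (X ^ 2 - X - 1)) := by
    have h0 : Polynomial.eval₂ (of f) (root f)
        ((X : (ZMod 3)[X][X]) ^ 2 - C ((X ^ 2 - 1) * (X ^ 2 - X - 1))) = 0 := by
      rw [← hf]; exact AdjoinRoot.eval₂_root f
    simp only [eval₂_sub, eval₂_pow, eval₂_X, eval₂_C] at h0
    linear_combination h0
  set v : AdjoinRoot f := of f X with hv
  set b : AdjoinRoot f := root f with hbdef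
  have ha : of f (X ^ 2 + X - 1) = v ^ 2 + v - 1 := by
    simp only [map_sub, map_add, map_pow, map_one, ← hv]
  have hb' : b ^ 2 = (v ^ 2 - 1) * (v ^ 2 - v - 1) := by
    rw [hbdef, hb]
    simp only [map_mul, map_sub, map_pow, map_one, ← hv]
  rw [ha]
  induction m using Nat.twoStepInduction with
  | zero =>
    simp only [pAux, Polynomial.map_add, Polynomial.map_mul, Polynomial.map_pow,
      Polynomial.map_X, Polynomial.map_ofNat, Polynomial.map_one,
      map_add, map_mul, map_pow, map_ofNat, map_one, ← hv]
    linear_combination (2 * b) * hb' +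
      (b * (3 * v ^ 4 + 4 * v ^ 3 - 3 * v ^ 2 - 3 * v + 2)) * h3
  | one =>
    simp only [pAux, Polynomial.map_neg, Polynomial.map_add, Polynomial.map_mul,
      Polynomial.map_pow, Polynomial.map_X, Polynomial.map_ofNat, Polynomial.map_one,
      map_neg, map_add, map_mul, map_pow, map_ofNat, map_one, ← hv]
    linear_combination (8 * (v ^ 2 + v - 1) * b) * hb' +
      (b * (5 * v ^ 6 + 7 * v ^ 5 - 12 * v ^ 4 - 15 * v ^ 3 + 8 * v ^ 2 + 6 * v - 4)) * h3
  | more m ih0 ih1 =>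
    simp only [pAux, Polynomial.map_neg, Polynomial.map_add, Polynomial.map_mul,
      Polynomial.map_pow, Polynomial.map_X, Polynomial.map_ofNat,
      map_neg, map_add, map_mul, map_pow, map_ofNat, ← hv]
    linear_combination (-(v ^ 2 + v + 2)) * ih1 + (-(v ^ 2)) * ih0 +
      ((-(v ^ 2 + v)) * (((v ^ 2 + v - 1) + b) ^ (m + 2) - ((v ^ 2 + v - 1) - b) ^ (m + 2) -
          ((v ^ 2 + v - 1) + b) ^ (m + 4) + ((v ^ 2 + v - 1) - b) ^ (m + 4)) +
        (v ^ 3 - v) * (((v ^ 2 + v - 1) + b) ^ (m + 1) - ((v ^ 2 + v - 1) - b) ^ (m + 1) -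
          ((v ^ 2 + v - 1) + b) ^ (m + 3) + ((v ^ 2 + v - 1) - b) ^ (m + 3))) * h3 +
      (-(((v ^ 2 + v - 1) + b) ^ (m + 1) - ((v ^ 2 + v - 1) - b) ^ (m + 1) -
          ((v ^ 2 + v - 1) + b) ^ (m + 3) + ((v ^ 2 + v - 1) - b) ^ (m + 3))) * hb'

/-- For every odd negative integer `n`, with `k = (1-n)/2`, in the ring
`𝔽₃[v][b]/(b^2 - (v^2-1)(v^2-v-1))` one has, with `a = v^2 + v - 1`:
`v·b·p_n = (a+b)^k - (a-b)^k - (a+b)^(k+2) + (a-b)^(k+2)`. -/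
theorem p_closed_form_mod_three (n : ℤ) (hodd : Odd n) (hneg : n < 0) :
    ∀ f : Polynomial (Polynomial (ZMod 3)),
      f = X ^ 2 - C ((X ^ 2 - 1) * (X ^ 2 - X - 1)) →
      ∀ k : ℕ, k = ((1 - n) / 2).toNat →
      (AdjoinRoot.of f X) * (AdjoinRoot.root f) *
          (AdjoinRoot.of f ((pp n).map (Int.castRingHom (ZMod 3)))) =
        (AdjoinRoot.of f (X ^ 2 + X - 1) + AdjoinRoot.root f) ^ k -
          (AdjoinRoot.of f (X ^ 2 + X - 1) - AdjoinRoot.root f) ^ k -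
          (AdjoinRoot.of f (X ^ 2 + X - 1) + AdjoinRoot.root f) ^ (k + 2) +
          (AdjoinRoot.of f (X ^ 2 + X - 1) - AdjoinRoot.root f) ^ (k + 2) := by
  intro f hf k hk
  have h1 : k = ((-1 - n) / 2).toNat + 1 := by omega
  simp only [pp, if_pos hneg]
  rw [h1]
  exact pAux_key f hf ((-1 - n) / 2).toNat
end
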